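/- Let X be a finite set with |X| = n ≥ 2, f : X → X a bijection, and d ≥ 2 an integer. Then the submonoid {s ∈ S(X,r_f) : d divides ℓ(s)} of the Yang–Baxter monoid S(X,r_f) is isomorphic as a monoid to S(X, r_{f^d}). Consequently, for every field k the d-Veronese subalgebra A(k,X,r_f)^{(d)} = ⊕_{m≥0} A_{md} of the Yang–Baxter algebra A(k,X,r_f) is isomorphic to A(k,X,r_{f^d}). -/

import Mathlib

def rPerm {X : Type*} (f : X → X) : X × X → X × X := fun p => (f p.2, p.2)

def ybRel {X : Type*} (r : X × X → X × X) : FreeMonoid X → FreeMonoid X → Prop :=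
  fun a b => ∃ x y : X,
    a = FreeMonoid.of x * FreeMonoid.of y ∧
    b = FreeMonoid.of (r (x, y)).1 * FreeMonoid.of (r (x, y)).2

def ybCon {X : Type*} (r : X × X → X × X) : Con (FreeMonoid X) := conGen (ybRel r)

namespace Stmt15Aux

/-- Model semigroup: `⟨m, x⟩` stands for a word of length `m + 1` ending in `x`. -/
structure PM (X : Type*) where
  m : ℕ
  x : X

variable {X : Type*}

instance : Semigroup (PM X) where
  mul a b := ⟨a.m + b.m + 1, b.x⟩
  mul_assoc a b c := by
    show PM.mk (a.m + b.m + 1 + c.m + 1) c.x = PM.mk (a.m + (b.m + c.m + 1) + 1) c.x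
    congr 1
    omega

lemma PM.mul_def (a b : PM X) : a * b = ⟨a.m + b.m + 1, b.x⟩ := rfl

/-- The model monoid, independent of the defining map. -/
abbrev Mdl (X : Type*) := WithOne (PM X)

/-- Class of the generator `x` in the Yang–Baxter monoid. -/
def γ (g : X → X) (x : X) : (ybCon (rPerm g)).Quotient :=
  (ybCon (rPerm g)).mk' (FreeMonoid.of x)

lemma gen_rel (g : X → X) (x y : X) :
    (ybCon (rPerm g)).mk' (FreeMonoid.of x * FreeMonoid.of y)
      = (ybCon (rPerm g)).mk' (FreeMonoid.of (g y) * FreeMonoid.of y) :=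
  (Con.eq _).2 (ConGen.Rel.of _ _ ⟨x, y, rfl, rfl⟩)

lemma sq (g : X → X) (x y : X) : γ g x * γ g y = γ g y * γ g y := by
  have h1 := gen_rel g x y
  have h2 := gen_rel g y y
  simp only [map_mul] at h1 h2
  exact h1.trans h2.symm

lemma pow_mul_gen (g : X → X) (m : ℕ) (x y : X) :
    γ g x ^ (m + 1) * γ g y = γ g y ^ (m + 2) := by
  induction m with
  | zero => simpa [pow_succ] using sq g x y
  | succ n ih =>
    calc γ g x ^ (n + 2) * γ g y
        = γ g x ^ (n + 1) * (γ g x * γ g y) := by rw [pow_succ, mul_assoc]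
      _ = γ g x ^ (n + 1) * (γ g y * γ g y) := by rw [sq]
      _ = (γ g x ^ (n + 1) * γ g y) * γ g y := by rw [mul_assoc]
      _ = γ g y ^ (n + 2) * γ g y := by rw [ih]
      _ = γ g y ^ (n + 3) := by rw [← pow_succ]

lemma pow_mul_pow (g : X → X) (m k : ℕ) (x y : X) :
    γ g x ^ (m + 1) * γ g y ^ (k + 1) = γ g y ^ (m + k + 2) := by
  rw [pow_succ' (γ g y) k, ← mul_assoc, pow_mul_gen, ← pow_add]
  congr 1
  omega

/-- The inverse homomorphism from the model monoid. -/
def ψ (g : X → X) : Mdl X →* (ybCon (rPerm g)).Quotient :=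
  WithOne.lift
    { toFun := fun p => γ g p.x ^ (p.m + 1)
      map_mul' := fun a b => by
        show γ g b.x ^ (a.m + b.m + 1 + 1) = γ g a.x ^ (a.m + 1) * γ g b.x ^ (b.m + 1)
        rw [pow_mul_pow] }

lemma ψ_coe (g : X → X) (p : PM X) : ψ g (p : Mdl X) = γ g p.x ^ (p.m + 1) :=
  WithOne.lift_coe _ _

/-- The homomorphism to the model monoid. -/
def φ (g : X → X) : (ybCon (rPerm g)).Quotient →* Mdl X :=
  Con.lift _ (FreeMonoid.lift fun x => ((⟨0, x⟩ : PM X) : Mdl X)) (by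
    refine Con.conGen_le.2 ?_
    rintro a b ⟨x, y, rfl, rfl⟩
    show FreeMonoid.lift _ _ = FreeMonoid.lift _ _
    simp only [map_mul, FreeMonoid.lift_eval_of, ← WithOne.coe_mul]
    rfl)

lemma φ_γ (g : X → X) (x : X) : φ g (γ g x) = ((⟨0, x⟩ : PM X) : Mdl X) := by
  show Con.lift _ _ _ ((ybCon (rPerm g)).mk' (FreeMonoid.of x)) = _
  erw [Con.lift_mk']
  rfl

lemma coe_pow (p : PM X) (n : ℕ) :
    ((⟨0, p.x⟩ : PM X) : Mdl X) ^ (n + 1) = ((⟨n, p.x⟩ : PM X) : Mdl X) := by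
  induction n with
  | zero => rw [pow_one]
  | succ n ih =>
    rw [pow_succ, ih, ← WithOne.coe_mul]
    rfl

lemma φψ (g : X → X) (w : Mdl X) : φ g (ψ g w) = w := by
  induction w using WithOne.recOneCoe with
  | one => simp
  | coe p => rw [ψ_coe, map_pow, φ_γ, coe_pow]

lemma ψφ (g : X → X) (q : (ybCon (rPerm g)).Quotient) : ψ g (φ g q) = q := by
  obtain ⟨w, rfl⟩ := Con.mk'_surjective q
  induction w using FreeMonoid.inductionOn with
  | one => simp
  | of x =>
    show ψ g (φ g (γ g x)) = γ g x
    rw [φ_γ, ψ_coe, pow_one]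
  | mul a b ha hb =>
    rw [map_mul, map_mul, map_mul, ha, hb]

/-- The "multiply length by `d`" endomorphism of the model monoid. -/
def dl (d : ℕ) (hd : 1 ≤ d) : Mdl X →* Mdl X :=
  WithOne.lift
    { toFun := fun p => ((⟨d * p.m + d - 1, p.x⟩ : PM X) : Mdl X)
      map_mul' := fun a b => by
        rw [← WithOne.coe_mul]
        show (((⟨d * (a.m + b.m + 1) + d - 1, (a * b).x⟩ : PM X)) : Mdl X) = _
        rw [PM.mul_def]
        congr 1
        show PM.mk _ _ = PM.mk _ _
        congr 1
        show d * (a.m + b.m + 1) + d - 1 = (d * a.m + d - 1) + (d * b.m + d - 1) + 1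
        have : d * (a.m + b.m + 1) = d * a.m + d * b.m + d := by ring
        omega }

lemma dl_coe (d : ℕ) (hd : 1 ≤ d) (p : PM X) :
    dl d hd (p : Mdl X) = ((⟨d * p.m + d - 1, p.x⟩ : PM X) : Mdl X) :=
  WithOne.lift_coe _ _

lemma dl_injective (d : ℕ) (hd : 1 ≤ d) : Function.Injective (dl (X := X) d hd) := by
  intro u v h
  induction u using WithOne.recOneCoe with
  | one =>
    induction v using WithOne.recOneCoe with
    | one => rfl
    | coe q =>
      rw [map_one, dl_coe] at h
      exact absurd h.symm WithOne.coe_ne_one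
  | coe p =>
    induction v using WithOne.recOneCoe with
    | one =>
      rw [map_one, dl_coe] at h
      exact absurd h WithOne.coe_ne_one
    | coe q =>
      rw [dl_coe, dl_coe, WithOne.coe_inj] at h
      simp only [PM.mk.injEq] at h
      obtain ⟨h1, h2⟩ := h
      have hm : p.m = q.m :=
        Nat.eq_of_mul_eq_mul_left (by omega) (by omega : d * p.m = d * q.m)
      exact WithOne.coe_inj.2 (congrArg₂ PM.mk hm h2)

end Stmt15Aux

theorem stmt15 {X : Type*} [Finite X] (n : ℕ) (hn : 2 ≤ n) (hcard : Nat.card X = n)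
    (f : Equiv.Perm X) (d : ℕ) (hd : 2 ≤ d)
    (ℓ : (ybCon (rPerm ⇑f)).Quotient → ℕ)
    (hone : ∀ x : X, ℓ ((ybCon (rPerm ⇑f)).mk' (FreeMonoid.of x)) = 1)
    (hmul : ∀ a b, ℓ (a * b) = ℓ a + ℓ b)
    (k : Type*) [Field k] :
    (∃ T : Submonoid (ybCon (rPerm ⇑f)).Quotient,
      (∀ s, s ∈ T ↔ d ∣ ℓ s) ∧
      Nonempty (T ≃* (ybCon (rPerm ⇑(f ^ d))).Quotient)) ∧
    (∃ V : Subalgebra k (MonoidAlgebra k (ybCon (rPerm ⇑f)).Quotient),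
      Subalgebra.toSubmodule V = Submodule.span k
        {a | ∃ s, d ∣ ℓ s ∧ a = MonoidAlgebra.of k (ybCon (rPerm ⇑f)).Quotient s} ∧
      Nonempty (V ≃ₐ[k] MonoidAlgebra k (ybCon (rPerm ⇑(f ^ d))).Quotient)) := by
  classical
  have hd1 : 1 ≤ d := by omega
  have hγ : ∀ x : X, ℓ (Stmt15Aux.γ (⇑f) x) = 1 := hone
  have hl1 : ℓ 1 = 0 := by
    have := hmul 1 1
    simp only [mul_one] at this
    omega
  have hlpow : ∀ (x : X) (m : ℕ), ℓ (Stmt15Aux.γ (⇑f) x ^ m) = m := by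
    intro x m
    induction m with
    | zero => simpa [pow_zero] using hl1
    | succ m ih => rw [pow_succ, hmul, ih, hγ]
  -- the submonoid
  set T : Submonoid (ybCon (rPerm ⇑f)).Quotient :=
    { carrier := {s | d ∣ ℓ s}
      one_mem' := by
        show d ∣ ℓ 1
        rw [hl1]
        exact dvd_zero d
      mul_mem' := by
        intro a b ha hb
        show d ∣ ℓ (a * b)
        rw [hmul]
        exact dvd_add ha hb } with hTdef
  have hT : ∀ s, s ∈ T ↔ d ∣ ℓ s := fun _ => Iff.rfl
  -- the comparison homomorphism
  set χ : (ybCon (rPerm ⇑(f ^ d))).Quotient →* (ybCon (rPerm ⇑f)).Quotient :=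
    (Stmt15Aux.ψ ⇑f).comp ((Stmt15Aux.dl d hd1).comp (Stmt15Aux.φ ⇑(f ^ d))) with hχdef
  have hχ : ∀ q', χ q' = Stmt15Aux.ψ ⇑f (Stmt15Aux.dl d hd1 (Stmt15Aux.φ ⇑(f ^ d) q')) :=
    fun _ => rfl
  have hmem : ∀ q', χ q' ∈ T := by
    intro q'
    rw [hT, hχ]
    generalize Stmt15Aux.φ ⇑(f ^ d) q' = w
    induction w using WithOne.recOneCoe with
    | one => simp [hl1]
    | coe p =>
      rw [Stmt15Aux.dl_coe, Stmt15Aux.ψ_coe, hlpow]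
      show d ∣ d * p.m + d - 1 + 1
      refine ⟨p.m + 1, ?_⟩
      rw [Nat.sub_add_cancel (le_trans hd1 (Nat.le_add_left d (d * p.m))), Nat.mul_succ]
  have hinj : Function.Injective χ := by
    intro a b h
    have h2 := congrArg (Stmt15Aux.φ ⇑f) h
    rw [hχ, hχ, Stmt15Aux.φψ, Stmt15Aux.φψ] at h2
    have h3 := Stmt15Aux.dl_injective d hd1 h2
    have h4 := congrArg (Stmt15Aux.ψ ⇑(f ^ d)) h3
    rwa [Stmt15Aux.ψφ, Stmt15Aux.ψφ] at h4
  set χ' : (ybCon (rPerm ⇑(f ^ d))).Quotient →* T := χ.codRestrict T hmem with hχ'def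
  have hbij : Function.Bijective χ' := by
    constructor
    · intro a b h
      exact hinj (congrArg Subtype.val h)
    · rintro ⟨s, hs⟩
      have hsψ : Stmt15Aux.ψ ⇑f (Stmt15Aux.φ ⇑f s) = s := Stmt15Aux.ψφ _ s
      generalize hw : Stmt15Aux.φ ⇑f s = w at hsψ
      clear hw
      induction w using WithOne.recOneCoe with
      | one =>
        refine ⟨1, ?_⟩
        apply Subtype.ext
        show χ 1 = s
        rw [map_one]
        rw [map_one] at hsψ
        exact hsψ
      | coe p =>
        rw [Stmt15Aux.ψ_coe] at hsψ
        have hls : ℓ s = p.m + 1 := by rw [← hsψ]; exact hlpow _ _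
        have hs' : d ∣ ℓ s := hs
        obtain ⟨c, hc⟩ := hs'
        have hc' : p.m + 1 = d * c := by omega
        rcases c with _ | c'
        · rw [Nat.mul_zero] at hc'; omega
        refine ⟨Stmt15Aux.ψ ⇑(f ^ d) ((⟨c', p.x⟩ : Stmt15Aux.PM X) : Stmt15Aux.Mdl X), ?_⟩
        apply Subtype.ext
        show χ _ = s
        rw [hχ, Stmt15Aux.φψ, Stmt15Aux.dl_coe, Stmt15Aux.ψ_coe]
        show Stmt15Aux.γ (⇑f) p.x ^ (d * c' + d - 1 + 1) = s
        rw [← hsψ]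
        congr 1
        rw [Nat.sub_add_cancel (le_trans hd1 (Nat.le_add_left d (d * c'))), hc', Nat.mul_succ]
  have e1 : (ybCon (rPerm ⇑(f ^ d))).Quotient ≃* T := MulEquiv.ofBijective χ' hbij
  refine ⟨⟨T, hT, ⟨e1.symm⟩⟩, ?_⟩
  -- algebra part
  set ι : MonoidAlgebra k T →ₐ[k] MonoidAlgebra k (ybCon (rPerm ⇑f)).Quotient :=
    MonoidAlgebra.mapDomainAlgHom k k T.subtype with hιdef
  have hιapp : ∀ v, ι v = MonoidAlgebra.mapDomain (T.subtype) v := fun _ => rfl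
  have hιinj : Function.Injective ι := by
    intro a b h
    exact MonoidAlgebra.mapDomain_injective Subtype.val_injective h
  refine ⟨ι.range, ?_, ?_⟩
  · apply le_antisymm
    · intro a ha
      rw [Subalgebra.mem_toSubmodule] at ha
      obtain ⟨v, rfl⟩ := (AlgHom.mem_range _).1 ha
      clear ha
      induction v using MonoidAlgebra.induction with
      | zero => simp
      | single_add t c w ht hc ih =>
        rw [map_add]
        refine Submodule.add_mem _ ?_ ih
        have hsingle : ι (MonoidAlgebra.single t c)
            = c • (MonoidAlgebra.of k (ybCon (rPerm ⇑f)).Quotient ↑t) := by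
          rw [hιapp, MonoidAlgebra.mapDomain_single, MonoidAlgebra.of_apply, MonoidAlgebra.smul_single',
            mul_one]
          rfl
        rw [hsingle]
        exact Submodule.smul_mem _ c (Submodule.subset_span ⟨↑t, t.2, rfl⟩)
    · rw [Submodule.span_le]
      rintro a ⟨s, hs, rfl⟩
      rw [SetLike.mem_coe, Subalgebra.mem_toSubmodule]
      refine ⟨MonoidAlgebra.single (⟨s, hs⟩ : T) 1, ?_⟩
      show ι (MonoidAlgebra.single (⟨s, hs⟩ : T) 1) = _
      rw [hιapp, MonoidAlgebra.mapDomain_single]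
      rfl
  · exact ⟨(AlgEquiv.ofInjective ι hιinj).symm.trans (MonoidAlgebra.domCongr k k e1.symm)⟩
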